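/- arXiv:2512.01414 — 2 statements merged into one kernel-verified Lean document; each statement's English description precedes it below -/
import Mathlib

section
/- Let Â = A_s + A_d·ε be an n×n dual quaternion matrix, and let χ(A_s) ∈ ℂ^{2n×2n} be the complex adjoint matrix of A_s. Suppose λ₁ ∈ ℂ is a root of the characteristic polynomial of χ(A_s) such that: (a) the root multiplicity of λ₁ in the characteristic polynomial of χ(A_s) equals the dimension of the kernel of χ(A_s) − λ₁·I; and (b) every root μ of the characteristic polynomial of χ(A_s) satisfies |μ| ≤ |λ₁|, with equality only when μ = λ₁ or μ = conj(λ₁). Then there exists λ_d ∈ ℍ and an appreciable vector x̂ : Fin n → DualNumber ℍ such that Â.mulVec x̂ = fun i => (x̂ i) * (λ₁ + λ_d·ε), where λ₁ is regarded as a quaternion with zero j- and k-parts; i.e., Â has a right eigenvalue whose standard part is λ₁. -/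
local notation "ℍ" => Quaternion ℝ

/-- The dual quaternion matrix with standard part `A` and dual part `B`. -/
noncomputable def dm {ι : Type*} (A B : Matrix ι ι ℍ) : Matrix ι ι (DualNumber ℍ) :=
  A.map TrivSqZeroExt.inl + B.map TrivSqZeroExt.inr

/-- The first complex component of a quaternion: `q = c1 q + (c2 q) * j`. -/
noncomputable def c1 (q : ℍ) : ℂ := ⟨q.re, q.imI⟩

/-- The second complex component of a quaternion: `q = c1 q + (c2 q) * j`. -/
noncomputable def c2 (q : ℍ) : ℂ := ⟨q.imJ, q.imK⟩

/-- The complex adjoint matrix of a quaternion matrix. -/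
noncomputable def chi {n : ℕ} (M : Matrix (Fin n) (Fin n) ℍ) :
    Matrix (Fin n ⊕ Fin n) (Fin n ⊕ Fin n) ℂ :=
  Matrix.fromBlocks (M.map c1) (M.map c2)
    (-(M.map fun q => starRingEnd ℂ (c2 q))) (M.map fun q => starRingEnd ℂ (c1 q))

open Polynomial Matrix LinearMap

section ComplexSide

variable {ι : Type*} [Fintype ι] [DecidableEq ι]

private lemma charpoly_mulVecLin (A : Matrix ι ι ℂ) :
    (A.mulVecLin : Module.End ℂ (ι → ℂ)).charpoly = A.charpoly := by
  rw [← LinearMap.charpoly_toMatrix A.mulVecLin (Pi.basisFun ℂ ι),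
    LinearMap.toMatrix_eq_toMatrix', ← Matrix.toLin'_apply', LinearMap.toMatrix'_toLin']

private lemma charpoly_sub_smul (A : Matrix ι ι ℂ) (lam : ℂ) :
    (A - lam • 1).charpoly = A.charpoly.comp (X + C lam) := by
  have h : (A - lam • 1).charmatrix = (A.charmatrix).map (aeval (X + C lam)) := by
    ext i j
    by_cases hij : i = j
    · subst hij
      simp only [charmatrix_apply_eq, Matrix.map_apply, map_sub, aeval_X, aeval_C,
        Matrix.sub_apply, Matrix.smul_apply, Matrix.one_apply_eq, smul_eq_mul, mul_one, C_sub,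
        Polynomial.algebraMap_eq]
      ring
    · simp [charmatrix_apply_ne _ _ _ hij, Matrix.sub_apply, Matrix.smul_apply,
        Matrix.one_apply_ne hij, aeval_C]
  rw [Matrix.charpoly, h, Matrix.charpoly, comp_eq_aeval, AlgHom.map_det, AlgHom.mapMatrix_apply]

/-- The key linear-algebra fact, entirely on the complex side: if the root multiplicity of `lam`
in the characteristic polynomial of `M` equals the geometric multiplicity, then for any `G` there
are `c`, an eigenvector `u` of `M` and a vector `v` solving the dual-part equation. -/
private lemma key (M G : Matrix ι ι ℂ) (lam : ℂ)
    (hroot : M.charpoly.IsRoot lam)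
    (ha : Polynomial.rootMultiplicity lam M.charpoly =
      Module.finrank ℂ (LinearMap.ker (M - lam • 1).mulVecLin)) :
    ∃ (c : ℂ) (u v : ι → ℂ), u ≠ 0 ∧
      M.mulVec u = lam • u ∧
      M.mulVec v + G.mulVec u = lam • v + c • u := by
  set φ : Module.End ℂ (ι → ℂ) := (M - lam • 1).mulVecLin with hφ
  have hchar : φ.charpoly = M.charpoly.comp (X + C lam) := by
    rw [hφ, _root_.charpoly_mulVecLin, _root_.charpoly_sub_smul]
  have hfin : Module.finrank ℂ (φ.maxGenEigenspace 0) = Module.finrank ℂ (LinearMap.ker φ) := by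
    rw [LinearMap.finrank_maxGenEigenspace_zero_eq, hchar,
      ← Polynomial.rootMultiplicity_eq_natTrailingDegree, ha]
  have hle : LinearMap.ker φ ≤ φ.maxGenEigenspace 0 := by
    intro x hx
    rw [Module.End.mem_maxGenEigenspace]
    exact ⟨1, by simpa using hx⟩
  have hker : (LinearMap.ker φ : Submodule ℂ (ι → ℂ)) = φ.maxGenEigenspace 0 :=
    Submodule.eq_of_le_of_finrank_le hle (le_of_eq hfin)
  have hdisj : LinearMap.ker φ ⊓ LinearMap.range φ = ⊥ := by
    rw [eq_bot_iff]
    rintro x ⟨hxk, w, rfl⟩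
    have hw : w ∈ φ.maxGenEigenspace 0 := by
      rw [Module.End.mem_maxGenEigenspace]
      exact ⟨2, by simpa [pow_two] using hxk⟩
    rw [← hker] at hw
    simpa using hw
  have hcompl : IsCompl (LinearMap.ker φ) (LinearMap.range φ) := by
    refine ⟨disjoint_iff.mpr hdisj, codisjoint_iff.mpr ?_⟩
    apply Submodule.eq_top_of_finrank_eq
    have h1 := Submodule.finrank_sup_add_finrank_inf_eq (LinearMap.ker φ) (LinearMap.range φ)
    rw [hdisj] at h1
    simp only [finrank_bot, add_zero] at h1
    rw [h1, add_comm]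
    exact LinearMap.finrank_range_add_finrank_ker φ
  obtain ⟨m, hm0, hmker⟩ : ∃ m : ι → ℂ, m ≠ 0 ∧ φ m = 0 := by
    rw [← LinearMap.charpoly_constantCoeff_eq_zero_iff]
    have : constantCoeff φ.charpoly = φ.charpoly.eval 0 := by
      simp [Polynomial.constantCoeff_apply, Polynomial.coeff_zero_eq_eval_zero]
    rw [this, hchar, Polynomial.eval_comp]
    simpa using hroot
  haveI : Nontrivial (LinearMap.ker φ) :=
    Submodule.nontrivial_iff_ne_bot.mpr (by
      intro h
      exact hm0 (by simpa [h] using (LinearMap.mem_ker.mpr hmker : m ∈ LinearMap.ker φ)))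
  set π := Submodule.projectionOnto _ _ hcompl
  set Ψ : Module.End ℂ (LinearMap.ker φ) := π.comp (G.mulVecLin.domRestrict (LinearMap.ker φ))
  obtain ⟨c, hc⟩ := Module.End.exists_eigenvalue Ψ
  obtain ⟨u0, hu0⟩ := hc.exists_hasEigenvector
  set u : ι → ℂ := (u0 : ι → ℂ)
  have huker : φ u = 0 := u0.2
  have hΨ : π (G.mulVec u) = c • u0 := by
    have := hu0.apply_eq_smul
    simpa [Ψ, Matrix.mulVecLin_apply] using this
  have hrange : c • u - G.mulVec u ∈ LinearMap.range φ := by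
    rw [← Submodule.projectionOnto_apply_eq_zero_iff (h := hcompl)]
    have hπu : π u = u0 := Submodule.projectionOnto_apply_left hcompl u0
    rw [map_sub, _root_.map_smul, hπu, hΨ, sub_self]
  obtain ⟨v, hv⟩ := hrange
  have hmv : ∀ w : ι → ℂ, φ w = M.mulVec w - lam • w := by
    intro w
    rw [hφ, Matrix.mulVecLin_apply, Matrix.sub_mulVec, Matrix.smul_mulVec, Matrix.one_mulVec]
  refine ⟨c, u, v, ?_, ?_, ?_⟩
  · intro h
    exact hu0.2 (by simpa [u, ZeroMemClass.coe_eq_zero] using h)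
  · have h := hmv u
    rw [huker, eq_comm, sub_eq_zero] at h
    exact h
  · have h := hv
    rw [hmv v] at h
    funext i
    have h2 := congrFun h i
    simp only [Pi.sub_apply, Pi.add_apply, Pi.smul_apply, smul_eq_mul] at h2 ⊢
    linear_combination h2

end ComplexSide

section QuaternionSide

private lemma c1_add (a b : ℍ) : c1 (a + b) = c1 a + c1 b := by
  apply Complex.ext <;> simp [c1]
private lemma c2_add (a b : ℍ) : c2 (a + b) = c2 a + c2 b := by
  apply Complex.ext <;> simp [c2]
private lemma c1_mul (a b : ℍ) : c1 (a * b) = c1 a * c1 b - c2 a * (starRingEnd ℂ) (c2 b) := by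
  apply Complex.ext <;> simp [c1, c2, Complex.mul_re, Complex.mul_im] <;> ring
private lemma c2_mul (a b : ℍ) : c2 (a * b) = c1 a * c2 b + c2 a * (starRingEnd ℂ) (c1 b) := by
  apply Complex.ext <;> simp [c1, c2, Complex.mul_re, Complex.mul_im] <;> ring

private noncomputable def c1hom : ℍ →+ ℂ := AddMonoidHom.mk' c1 c1_add
private noncomputable def c2hom : ℍ →+ ℂ := AddMonoidHom.mk' c2 c2_add

/-- The quaternion with complex components `z` and `0`. -/
private noncomputable def qc (z : ℂ) : ℍ := ⟨z.re, z.im, 0, 0⟩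

private lemma c1_qc (z : ℂ) : c1 (qc z) = z := by apply Complex.ext <;> simp [c1, qc]
private lemma c2_qc (z : ℂ) : c2 (qc z) = 0 := by apply Complex.ext <;> simp [c2, qc]

/-- The complex vector associated to a quaternion vector. -/
private noncomputable def wmap {n : ℕ} (x : Fin n → ℍ) : Fin n ⊕ Fin n → ℂ :=
  Sum.elim (fun i => c1 (x i)) (fun i => -(starRingEnd ℂ) (c2 (x i)))

private noncomputable def winv {n : ℕ} (v : Fin n ⊕ Fin n → ℂ) : Fin n → ℍ :=
  fun i => ⟨(v (Sum.inl i)).re, (v (Sum.inl i)).im, -(v (Sum.inr i)).re, (v (Sum.inr i)).im⟩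

private lemma wmap_winv {n : ℕ} (v : Fin n ⊕ Fin n → ℂ) : wmap (winv v) = v := by
  funext s
  cases s with
  | inl i => apply Complex.ext <;> simp [wmap, winv, c1]
  | inr i => apply Complex.ext <;> simp [wmap, winv, c2]

private lemma wmap_inj {n : ℕ} {x y : Fin n → ℍ} (h : wmap x = wmap y) : x = y := by
  funext i
  have h1 := congrFun h (Sum.inl i)
  have h2 := congrFun h (Sum.inr i)
  simp only [wmap, Sum.elim_inl, Sum.elim_inr, neg_inj] at h1 h2
  have h2' : c2 (x i) = c2 (y i) := by
    have := congrArg (starRingEnd ℂ) h2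
    simpa using this
  have e1 := congrArg Complex.re h1
  have e2 := congrArg Complex.im h1
  have e3 := congrArg Complex.re h2'
  have e4 := congrArg Complex.im h2'
  simp only [c1, c2] at e1 e2 e3 e4
  ext <;> assumption

private lemma wmap_add {n : ℕ} (x y : Fin n → ℍ) : wmap (x + y) = wmap x + wmap y := by
  funext s
  cases s with
  | inl i => simp [wmap, c1_add]
  | inr i => simp [wmap, c2_add]; ring

private lemma wmap_smul {n : ℕ} (x : Fin n → ℍ) (z : ℂ) :
    wmap (fun i => x i * qc z) = z • wmap x := by
  funext s
  cases s with
  | inl i => simp [wmap, c1_mul, c1_qc, c2_qc]; ring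
  | inr i => simp [wmap, c2_mul, c1_qc, c2_qc, _root_.map_mul]; ring

private lemma wmap_mulVec {n : ℕ} (A : Matrix (Fin n) (Fin n) ℍ) (x : Fin n → ℍ) :
    wmap (A.mulVec x) = (chi A).mulVec (wmap x) := by
  funext s
  cases s with
  | inl i =>
    have : wmap (A.mulVec x) (Sum.inl i) = c1hom (∑ j, A i j * x j) := rfl
    rw [this, map_sum]
    simp only [Matrix.mulVec, dotProduct, Fintype.sum_sum_type]
    simp only [chi, Matrix.fromBlocks_apply₁₁, Matrix.fromBlocks_apply₁₂, Matrix.map_apply,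
      wmap, Sum.elim_inl, Sum.elim_inr, c1hom, AddMonoidHom.mk'_apply, c1_mul]
    rw [← Finset.sum_add_distrib]
    exact Finset.sum_congr rfl fun j _ => by ring
  | inr i =>
    have : wmap (A.mulVec x) (Sum.inr i) = -(starRingEnd ℂ) (c2hom (∑ j, A i j * x j)) := rfl
    rw [this, map_sum, map_sum]
    simp only [Matrix.mulVec, dotProduct, Fintype.sum_sum_type]
    simp only [chi, Matrix.fromBlocks_apply₂₁, Matrix.fromBlocks_apply₂₂, Matrix.map_apply,
      Matrix.neg_apply, wmap, Sum.elim_inl, Sum.elim_inr, c2hom, AddMonoidHom.mk'_apply, c2_mul,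
      neg_mul, Finset.sum_neg_distrib]
    simp only [mul_neg, ← Finset.sum_neg_distrib, ← Finset.sum_add_distrib, ← neg_add]
    -- termwise
    exact Finset.sum_congr rfl fun j _ => by
      simp only [map_add, _root_.map_mul, Complex.conj_conj]
      ring

private lemma wmap_zero {n : ℕ} : wmap (0 : Fin n → ℍ) = 0 := by
  funext s
  cases s with
  | inl i => apply Complex.ext <;> simp [wmap, c1] <;> rfl
  | inr i => apply Complex.ext <;> simp [wmap, c2] <;> rfl

end QuaternionSide

theorem stmt5 {n : ℕ} (As Ad : Matrix (Fin n) (Fin n) ℍ) (lam1 : ℂ)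
    (hroot : (chi As).charpoly.IsRoot lam1)
    (ha : Polynomial.rootMultiplicity lam1 (chi As).charpoly =
      Module.finrank ℂ (LinearMap.ker (chi As - lam1 • 1).mulVecLin))
    (hb : ∀ μ : ℂ, (chi As).charpoly.IsRoot μ →
      ‖μ‖ ≤ ‖lam1‖ ∧ (‖μ‖ = ‖lam1‖ → μ = lam1 ∨ μ = starRingEnd ℂ lam1)) :
    ∃ (lamd : ℍ) (x : Fin n → DualNumber ℍ), (fun i => (x i).fst) ≠ 0 ∧
      (dm As Ad).mulVec x =
        fun i => x i *
          ((TrivSqZeroExt.inl (⟨lam1.re, lam1.im, 0, 0⟩ : ℍ) +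
            TrivSqZeroExt.inr lamd : DualNumber ℍ)) := by
  obtain ⟨c, u, v, hu0, hu, hv⟩ := key (chi As) (chi Ad) lam1 hroot ha
  set xs : Fin n → ℍ := winv u with hxsdef
  set xd : Fin n → ℍ := winv v with hxddef
  have hwxs : wmap xs = u := wmap_winv u
  have hwxd : wmap xd = v := wmap_winv v
  have E1 : As.mulVec xs = fun i => xs i * qc lam1 := by
    apply wmap_inj
    rw [wmap_mulVec, hwxs, hu, wmap_smul, hwxs]
  have E2 : As.mulVec xd + Ad.mulVec xs = fun i => xd i * qc lam1 + xs i * qc c := by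
    apply wmap_inj
    show wmap (As.mulVec xd + Ad.mulVec xs) =
      wmap ((fun i => xd i * qc lam1) + fun i => xs i * qc c)
    rw [wmap_add, wmap_add, wmap_mulVec, wmap_mulVec, hwxs, hwxd, wmap_smul, wmap_smul,
      hwxs, hwxd, hv]
  refine ⟨qc c, fun i => TrivSqZeroExt.inl (xs i) + TrivSqZeroExt.inr (xd i), ?_, ?_⟩
  · intro h
    apply hu0
    have hxs0 : xs = 0 := by
      funext i
      have := congrFun h i
      simpa using this
    rw [← hwxs, hxs0, wmap_zero]
  · funext i
    have hdmfst : ∀ i j, ((dm As Ad) i j).fst = As i j := by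
      intro i j
      simp [dm, Matrix.add_apply, Matrix.map_apply]
    have hdmsnd : ∀ i j, ((dm As Ad) i j).snd = Ad i j := by
      intro i j
      simp [dm, Matrix.add_apply, Matrix.map_apply]
    refine TrivSqZeroExt.ext ?_ ?_
    · show (∑ j, (dm As Ad) i j * (TrivSqZeroExt.inl (xs j) + TrivSqZeroExt.inr (xd j))).fst = _
      rw [TrivSqZeroExt.fst_sum]
      simp only [TrivSqZeroExt.fst_mul, TrivSqZeroExt.fst_add, TrivSqZeroExt.fst_inl,
        TrivSqZeroExt.fst_inr, add_zero, hdmfst]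
      have := congrFun E1 i
      simp only [Matrix.mulVec, dotProduct] at this
      rw [this]
      simp [qc]
      erw [TrivSqZeroExt.fst_add, TrivSqZeroExt.fst_inl, TrivSqZeroExt.fst_inr, add_zero]
    · show (∑ j, (dm As Ad) i j * (TrivSqZeroExt.inl (xs j) + TrivSqZeroExt.inr (xd j))).snd = _
      rw [TrivSqZeroExt.snd_sum]
      simp only [TrivSqZeroExt.snd_mul, TrivSqZeroExt.fst_add, TrivSqZeroExt.snd_add,
        TrivSqZeroExt.fst_inl, TrivSqZeroExt.fst_inr, TrivSqZeroExt.snd_inl,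
        TrivSqZeroExt.snd_inr, add_zero, zero_add, hdmfst, hdmsnd, smul_eq_mul, MulOpposite.unop_op,
        MulOpposite.smul_eq_mul_unop]
      have := congrFun E2 i
      simp only [Pi.add_apply, Matrix.mulVec, dotProduct] at this
      rw [Finset.sum_add_distrib, this]
      erw [TrivSqZeroExt.fst_add, TrivSqZeroExt.fst_inl, TrivSqZeroExt.fst_inr, add_zero, TrivSqZeroExt.snd_add, TrivSqZeroExt.snd_inl, TrivSqZeroExt.snd_inr, zero_add]
      show xd i * qc lam1 + xs i * qc c = xs i * qc c + xd i * qc lam1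
      exact add_comm _ _
end

section
/- Let n₁, n₂ be natural numbers, λ_s, λ_d, r ∈ ℝ with 0 < r < |λ_s|, and set λ̂ = λ_s + λ_d·ε ∈ DualNumber ℝ, regarded as a central element of DualNumber ℍ, with inverse μ̂ = λ_s⁻¹ − (λ_s⁻¹·λ_d·λ_s⁻¹)·ε. Let J, H be n₂×n₂ quaternion matrices with J upper triangular and ‖J i i‖ ≤ r for every diagonal index i. Let P̂ be an invertible (n₁+n₂)×(n₁+n₂) matrix over DualNumber ℍ and define Â = P̂ · fromBlocks(λ̂·I_{n₁}, 0, 0, J + H·ε) · P̂⁻¹. Let η̂ : Fin n₁ ⊕ Fin n₂ → DualNumber ℍ, let v̂⁰ = P̂.mulVec η̂, let η̂' agree with η̂ on the first summand and be 0 on the second, and let û = P̂.mulVec η̂'. Then there exist C > 0 and d ∈ ℕ such that for every k ≥ 1: ‖(fun i => ((Â^k).mulVec v̂⁰) i * μ̂^k) − û‖_{2^R} ≤ C · k^d · (r/|λ_s|)^k. (This is the core convergence estimate for the power method applied to a dual quaternion matrix with a strict dominant dual-number eigenvalue λ̂.) -/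
local notation "ℍ" => Quaternion ℝ

/-- The `2^R`-norm of a dual quaternion vector:
`sqrt(‖standard part‖₂² + ‖dual part‖₂²)`. -/
noncomputable def norm2R {ι : Type*} [Fintype ι] (x : ι → DualNumber ℍ) : ℝ :=
  Real.sqrt (∑ i, ‖(x i).fst‖ ^ 2 + ∑ i, ‖(x i).snd‖ ^ 2)

/-- A real number regarded as a quaternion. -/
noncomputable def rq (a : ℝ) : ℍ := algebraMap ℝ ℍ a

open TrivSqZeroExt Matrix Finset

noncomputable def nd (x : DualNumber ℍ) : ℝ := ‖x.fst‖ + ‖x.snd‖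

lemma nd_nonneg (x : DualNumber ℍ) : 0 ≤ nd x := add_nonneg (norm_nonneg _) (norm_nonneg _)

lemma nd_mul_le (x y : DualNumber ℍ) : nd (x * y) ≤ nd x * nd y := by
  unfold nd
  rw [TrivSqZeroExt.fst_mul, TrivSqZeroExt.snd_mul, smul_eq_mul,
    MulOpposite.smul_eq_mul_unop, MulOpposite.unop_op]
  have h := norm_add_le (x.fst * y.snd) (x.snd * y.fst)
  have h1 := norm_mul_le x.fst y.snd
  have h2 := norm_mul_le x.snd y.fst
  have h3 := norm_mul_le x.fst y.fst
  have := norm_nonneg x.fst; have := norm_nonneg x.snd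
  have := norm_nonneg y.fst; have := norm_nonneg y.snd
  nlinarith [norm_nonneg (x.fst * y.snd), norm_nonneg (x.snd * y.fst)]

lemma nd_sum_le {ι : Type*} (s : Finset ι) (f : ι → DualNumber ℍ) :
    nd (∑ i ∈ s, f i) ≤ ∑ i ∈ s, nd (f i) := by
  classical
  induction s using Finset.induction with
  | empty => simp [nd]
  | insert _ _ h ih =>
      rw [Finset.sum_insert h, Finset.sum_insert h]
      refine le_trans ?_ (add_le_add_right ih _)
      unfold nd
      rw [TrivSqZeroExt.fst_add, TrivSqZeroExt.snd_add]
      have h1 := norm_add_le (f ‹_›).fst (∑ i ∈ ‹Finset _›, f i).fst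
      linarith [norm_add_le (f ‹_›).snd (∑ i ∈ ‹Finset _›, f i).snd]

lemma norm2R_le_sum_nd {ι : Type*} [Fintype ι] (x : ι → DualNumber ℍ) :
    norm2R x ≤ ∑ i, nd (x i) := by
  have h0 : ∀ i : ι, (0:ℝ) ≤ nd (x i) := fun i => nd_nonneg _
  have hs : (0:ℝ) ≤ ∑ i, nd (x i) := Finset.sum_nonneg fun i _ => h0 i
  rw [show (∑ i, nd (x i)) = Real.sqrt ((∑ i, nd (x i))^2) from (Real.sqrt_sq hs).symm]
  apply Real.sqrt_le_sqrt
  have h1 : ∑ i, ‖(x i).fst‖ ^ 2 ≤ (∑ i, ‖(x i).fst‖)^2 :=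
    Finset.sum_sq_le_sq_sum_of_nonneg fun i _ => norm_nonneg _
  have h2 : ∑ i, ‖(x i).snd‖ ^ 2 ≤ (∑ i, ‖(x i).snd‖)^2 :=
    Finset.sum_sq_le_sq_sum_of_nonneg fun i _ => norm_nonneg _
  have h3 : (∑ i, nd (x i)) = (∑ i, ‖(x i).fst‖) + (∑ i, ‖(x i).snd‖) := by
    rw [← Finset.sum_add_distrib]; rfl
  have ha : (0:ℝ) ≤ ∑ i, ‖(x i).fst‖ := Finset.sum_nonneg fun i _ => norm_nonneg _
  have hb : (0:ℝ) ≤ ∑ i, ‖(x i).snd‖ := Finset.sum_nonneg fun i _ => norm_nonneg _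
  nlinarith

lemma rq_commute (a : ℝ) (z : ℍ) : rq a * z = z * rq a := by
  simpa [rq] using Algebra.commutes a z

lemma rq_mul (a b : ℝ) : rq a * rq b = rq (a*b) := by rw [rq, rq, rq, ← _root_.map_mul]

lemma norm_rq (a : ℝ) : ‖rq a‖ = |a| := by
  rw [show rq a = (a : ℍ) from rfl, Quaternion.norm_coe, Real.norm_eq_abs]

lemma dual_commute (a b : ℝ) (x : DualNumber ℍ) :
    (inl (rq a) + inr (rq b)) * x = x * (inl (rq a) + inr (rq b)) := by
  refine TrivSqZeroExt.ext ?_ ?_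
  · simp [fst_mul, rq_commute]
  · simp only [snd_mul, fst_add, snd_add, fst_inl, fst_inr, snd_inl, snd_inr, add_zero,
      zero_add, smul_eq_mul, MulOpposite.smul_eq_mul_unop, MulOpposite.unop_op]
    rw [rq_commute, rq_commute]; exact add_comm _ _

lemma dual_pow (a b : ℝ) (k : ℕ) :
    ((inl (rq a) + inr (rq b)) : DualNumber ℍ)^k
      = inl (rq (a^k)) + inr (rq (k * a^(k-1) * b)) := by
  induction k with
  | zero => simp [rq]
  | succ k ih =>
      rw [pow_succ, ih]
      refine TrivSqZeroExt.ext ?_ ?_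
      · simp only [fst_mul, fst_add, fst_inl, fst_inr, add_zero, rq_mul, ← pow_succ]
      · simp only [snd_mul, fst_add, snd_add, fst_inl, fst_inr, snd_inl, snd_inr, add_zero,
          zero_add, smul_eq_mul, MulOpposite.smul_eq_mul_unop, MulOpposite.unop_op,
          rq_mul]
        rw [show rq (a^k*b) + rq (k*a^(k-1)*b*a) = rq (a^k*b + k*a^(k-1)*b*a) by
          rw [rq, rq, rq, ← map_add]]
        congr 1
        rcases Nat.eq_zero_or_pos k with hk | hk
        · subst hk; simp
        · have h : a ^ (k-1) * a = a ^ k := by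
            rw [← pow_succ]; congr 1; omega
          have h2 : (k:ℝ) * a^(k-1) * b * a = k * a^k * b := by rw [← h]; ring
          rw [h2]; push_cast [Nat.add_sub_cancel]; ring

lemma tri_pow {n₂ : ℕ} (J : Matrix (Fin n₂) (Fin n₂) ℍ)
    (hJtri : ∀ i j : Fin n₂, (j : ℕ) < (i : ℕ) → J i j = 0) :
    ∀ k : ℕ, ∀ i j : Fin n₂, (j:ℕ) < (i:ℕ) → (J^k) i j = 0 := by
  intro k
  induction k with
  | zero =>
      intro i j h
      have hne : i ≠ j := by intro e; subst e; omega
      simp [Matrix.one_apply, hne]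
  | succ k ih =>
      intro i j h
      rw [pow_succ, Matrix.mul_apply]
      apply Finset.sum_eq_zero
      intro l _
      rcases lt_or_ge (l:ℕ) (i:ℕ) with hl | hl
      · rw [ih i l hl, zero_mul]
      · rw [hJtri l j (by omega), mul_zero]

lemma entry_pow_bound {n₂ : ℕ} (J : Matrix (Fin n₂) (Fin n₂) ℍ) (r q : ℝ)
    (hr : 0 < r) (hq : 1 ≤ q)
    (hJtri : ∀ i j : Fin n₂, (j : ℕ) < (i : ℕ) → J i j = 0)
    (hJdiag : ∀ i, ‖J i i‖ ≤ r)
    (hoff : ∀ i j, ‖J i j‖ ≤ q * r) :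
    ∀ k : ℕ, ∀ i j : Fin n₂, ‖(J^k) i j‖ ≤
      (((k:ℝ)+1)*(n₂:ℝ))^((j:ℕ)-(i:ℕ)) * q^((j:ℕ)-(i:ℕ)) * r^k := by
  intro k
  induction k with
  | zero =>
      intro i j
      rcases eq_or_ne i j with h | h
      · subst h
        simp [Matrix.one_apply_eq]
      · rw [pow_zero, Matrix.one_apply_ne h, norm_zero]
        positivity
  | succ k ih =>
      intro i j
      have hn₂ : 1 ≤ (n₂:ℝ) := by exact_mod_cast i.pos
      rcases lt_or_ge (j:ℕ) (i:ℕ) with hji | hij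
      · rw [tri_pow J hJtri (k+1) i j hji, norm_zero]
        positivity
      · rw [pow_succ, Matrix.mul_apply]
        set c : ℕ := (j:ℕ) - (i:ℕ) with hc
        clear_value c
        have hb1 : (1:ℝ) ≤ ((k:ℝ)+1)*(n₂:ℝ) := by nlinarith [(Nat.cast_nonneg k : (0:ℝ) ≤ (k:ℝ))]
        have key : ∀ l : Fin n₂, l ≠ j →
            ‖(J^k) i l * J l j‖ ≤
              (if c = 0 then 0 else (((k:ℝ)+1)*(n₂:ℝ))^(c-1) * q^(c-1) * r^k * (q*r)) := by
          intro l hl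
          rcases lt_or_ge (l:ℕ) (i:ℕ) with h1 | h1
          · rw [tri_pow J hJtri k i l h1, zero_mul, norm_zero]
            split <;> positivity
          · rcases lt_or_ge (j:ℕ) (l:ℕ) with h2 | h2
            · rw [hJtri l j h2, mul_zero, norm_zero]
              split <;> positivity
            · have hlj : (l:ℕ) < (j:ℕ) := lt_of_le_of_ne h2 (fun h => hl (Fin.ext h))
              have hc1 : 1 ≤ c := by omega
              rw [if_neg (by omega)]
              have e1 : ‖(J^k) i l‖ ≤ (((k:ℝ)+1)*(n₂:ℝ))^(c-1) * q^(c-1) * r^k := by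
                refine le_trans (ih i l) ?_
                have hle : (l:ℕ)-(i:ℕ) ≤ c - 1 := by omega
                have hm1 : (((k:ℝ)+1)*(n₂:ℝ))^((l:ℕ)-(i:ℕ)) ≤ (((k:ℝ)+1)*(n₂:ℝ))^(c-1) :=
                  pow_le_pow_right₀ hb1 hle
                have hm2 : q^((l:ℕ)-(i:ℕ)) ≤ q^(c-1) := pow_le_pow_right₀ hq hle
                exact mul_le_mul_of_nonneg_right
                  (mul_le_mul hm1 hm2 (by positivity) (by positivity)) (by positivity)
              refine le_trans (norm_mul_le _ _) ?_
              exact mul_le_mul e1 (hoff l j) (norm_nonneg _) (by positivity)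
        have hsplit : (∑ l, (J^k) i l * J l j)
            = (∑ l ∈ Finset.univ.erase j, (J^k) i l * J l j) + (J^k) i j * J j j :=
          (Finset.sum_erase_add _ _ (Finset.mem_univ j)).symm
        rw [hsplit]
        refine le_trans (norm_add_le _ _) ?_
        have hdiagterm : ‖(J^k) i j * J j j‖ ≤
            (((k:ℝ)+1)*(n₂:ℝ))^c * q^c * r^k * r := by
          refine le_trans (norm_mul_le _ _) ?_
          have ihj := ih i j
          rw [← hc] at ihj
          exact mul_le_mul ihj (hJdiag j) (norm_nonneg _) (by positivity)
        have herase : ‖∑ l ∈ Finset.univ.erase j, (J^k) i l * J l j‖ ≤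
            (n₂:ℝ) * (if c = 0 then 0 else (((k:ℝ)+1)*(n₂:ℝ))^(c-1) * q^(c-1) * r^k * (q*r)) := by
          refine le_trans (norm_sum_le _ _) ?_
          refine le_trans (Finset.sum_le_sum (fun l hl => key l (Finset.ne_of_mem_erase hl))) ?_
          rw [Finset.sum_const, nsmul_eq_mul]
          have hcard : ((Finset.univ.erase j).card : ℝ) ≤ (n₂:ℝ) := by
            have h1 := Finset.card_erase_le (s := (Finset.univ : Finset (Fin n₂))) (a := j)
            have h2 : (Finset.univ : Finset (Fin n₂)).card = n₂ := by simp
            exact_mod_cast le_trans h1 (le_of_eq h2)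
          have hB : (0:ℝ) ≤ (if c = 0 then 0
              else (((k:ℝ)+1)*(n₂:ℝ))^(c-1) * q^(c-1) * r^k * (q*r)) := by
            split <;> positivity
          exact mul_le_mul_of_nonneg_right hcard hB
        rcases Nat.eq_zero_or_pos c with hc0 | hc1
        · rw [hc0] at herase hdiagterm ⊢
          rw [if_pos rfl] at herase
          simp only [pow_zero, one_mul, mul_one] at *
          have : r^k * r = r^(k+1) := (pow_succ r k).symm
          push_cast
          nlinarith [herase, hdiagterm]
        · rw [if_neg (by omega)] at herase
          refine le_trans (add_le_add herase hdiagterm) ?_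
          obtain ⟨c', rfl⟩ : ∃ c', c = c' + 1 := ⟨c - 1, by omega⟩
          rw [Nat.add_sub_cancel]
          set X : ℝ := (k:ℝ)+1 with hX
          have heq : (n₂:ℝ) * ((X*(n₂:ℝ))^(c') * q^(c') * r^k * (q*r))
              + (X*(n₂:ℝ))^(c'+1) * q^(c'+1) * r^k * r
              = ((X*(n₂:ℝ))^(c') * (n₂:ℝ) + (X*(n₂:ℝ))^(c'+1)) * (q^(c'+1) * r^(k+1)) := by
            rw [pow_succ q, pow_succ r, pow_succ (X*(n₂:ℝ))]
            ring
          rw [heq]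
          have hcore : (X*(n₂:ℝ))^(c') * (n₂:ℝ) + (X*(n₂:ℝ))^(c'+1)
              ≤ ((X+1)*(n₂:ℝ))^(c'+1) := by
            have hmono : (X*(n₂:ℝ))^(c') ≤ ((X+1)*(n₂:ℝ))^(c') := by
              apply pow_le_pow_left₀ (by positivity)
              nlinarith
            calc (X*(n₂:ℝ))^(c') * (n₂:ℝ) + (X*(n₂:ℝ))^(c'+1)
                = (X*(n₂:ℝ) + (n₂:ℝ)) * (X*(n₂:ℝ))^(c') := by rw [pow_succ]; ring
              _ ≤ ((X+1)*(n₂:ℝ)) * ((X+1)*(n₂:ℝ))^(c') := by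
                  apply mul_le_mul (by nlinarith) hmono (by positivity) (by positivity)
              _ = ((X+1)*(n₂:ℝ))^(c'+1) := by rw [pow_succ]; ring
          have hfin : (0:ℝ) ≤ q^(c'+1) * r^(k+1) := by positivity
          have := mul_le_mul_of_nonneg_right hcore hfin
          refine le_trans this (le_of_eq ?_)
          push_cast
          rw [hX]
          ring

lemma dm_fst {ι : Type*} (A B : Matrix ι ι ℍ) (i j : ι) : ((dm A B) i j).fst = A i j := by
  simp [dm, Matrix.add_apply, Matrix.map_apply]

lemma dm_snd {ι : Type*} (A B : Matrix ι ι ℍ) (i j : ι) : ((dm A B) i j).snd = B i j := by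
  simp [dm, Matrix.add_apply, Matrix.map_apply]

lemma dm_one {ι : Type*} [DecidableEq ι] : dm (1 : Matrix ι ι ℍ) 0 = 1 := by
  ext i j : 2
  · rw [dm_fst]
    rcases eq_or_ne i j with h | h
    · subst h; simp [Matrix.one_apply_eq]
    · simp [Matrix.one_apply_ne h]
  · rw [dm_snd]
    rcases eq_or_ne i j with h | h
    · subst h; simp [Matrix.one_apply_eq]
    · simp [Matrix.one_apply_ne h]

lemma dm_mul {ι : Type*} [Fintype ι] (A B C D : Matrix ι ι ℍ) :
    dm A B * dm C D = dm (A*C) (A*D + B*C) := by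
  ext i j : 2
  · rw [Matrix.mul_apply, fst_sum, dm_fst, Matrix.mul_apply]
    exact Finset.sum_congr rfl fun l _ => by rw [fst_mul, dm_fst, dm_fst]
  · rw [Matrix.mul_apply, snd_sum, dm_snd, Matrix.add_apply, Matrix.mul_apply, Matrix.mul_apply,
      ← Finset.sum_add_distrib]
    refine Finset.sum_congr rfl fun l _ => ?_
    rw [snd_mul, dm_fst, dm_snd, dm_fst, dm_snd, smul_eq_mul,
      MulOpposite.smul_eq_mul_unop, MulOpposite.unop_op]

lemma dm_pow {n₂ : ℕ} (J H : Matrix (Fin n₂) (Fin n₂) ℍ) (k : ℕ) :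
    (dm J H)^k = dm (J^k) (∑ m ∈ Finset.range k, J^m * H * J^(k-1-m)) := by
  induction k with
  | zero => simp [dm_one]
  | succ k ih =>
      rw [pow_succ, ih, dm_mul]
      have hA : J^k * J = J^(k+1) := (pow_succ J k).symm
      have hB : J^k * H + (∑ m ∈ Finset.range k, J^m*H*J^(k-1-m)) * J
          = ∑ m ∈ Finset.range (k+1), J^m*H*J^(k+1-1-m) := by
        rw [Finset.sum_mul]
        have h1 : ∀ m ∈ Finset.range k, (J^m*H*J^(k-1-m))*J = J^m*H*J^(k-m) := by
          intro m hm
          rw [Finset.mem_range] at hm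
          rw [mul_assoc (J^m*H), ← pow_succ]
          congr 2
          omega
        rw [Finset.sum_congr rfl h1, show k+1-1 = k from rfl, Finset.sum_range_succ,
          Nat.sub_self, pow_zero, mul_one, add_comm]
      rw [hA, hB]

section
variable {n₂ : ℕ} (J H : Matrix (Fin n₂) (Fin n₂) ℍ) (r q hB : ℝ)
  (hr : 0 < r) (hq : 1 ≤ q)
  (hJtri : ∀ i j : Fin n₂, (j : ℕ) < (i : ℕ) → J i j = 0)
  (hJdiag : ∀ i, ‖J i i‖ ≤ r)
  (hoff : ∀ i j, ‖J i j‖ ≤ q * r)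
  (hH : ∀ i j, ‖H i j‖ ≤ hB) (hB0 : 0 ≤ hB)

include hr hq hJtri hJdiag hoff in
lemma entry_pow_unif : ∀ k : ℕ, ∀ i j : Fin n₂,
    ‖(J^k) i j‖ ≤ (((k:ℝ)+1)*(n₂:ℝ))^(n₂) * q^(n₂) * r^k := by
  intro k i j
  have hn₂ : 1 ≤ (n₂:ℝ) := by exact_mod_cast i.pos
  have hb1 : (1:ℝ) ≤ ((k:ℝ)+1)*(n₂:ℝ) := by nlinarith [(Nat.cast_nonneg k : (0:ℝ) ≤ (k:ℝ))]
  refine le_trans (entry_pow_bound J r q hr hq hJtri hJdiag hoff k i j) ?_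
  have hle : (j:ℕ)-(i:ℕ) ≤ n₂ := by omega
  have hm1 : (((k:ℝ)+1)*(n₂:ℝ))^((j:ℕ)-(i:ℕ)) ≤ (((k:ℝ)+1)*(n₂:ℝ))^(n₂) :=
    pow_le_pow_right₀ hb1 hle
  have hm2 : q^((j:ℕ)-(i:ℕ)) ≤ q^(n₂) := pow_le_pow_right₀ hq hle
  exact mul_le_mul_of_nonneg_right
    (mul_le_mul hm1 hm2 (by positivity) (by positivity)) (by positivity)

include hr hq hJtri hJdiag hoff hH hB0 in
lemma dm_entry_bound : ∀ k : ℕ, ∀ i j : Fin n₂, nd ((dm J H ^ (k+1)) i j) ≤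
    (((k:ℝ)+2)*(n₂:ℝ))^(2*n₂+1) * (q^(2*n₂) * (1 + (n₂:ℝ)^2 * hB / r)) * r^(k+1) := by
  intro k i j
  have hn₂ : 1 ≤ (n₂:ℝ) := by exact_mod_cast i.pos
  have hb1 : (1:ℝ) ≤ ((k:ℝ)+2)*(n₂:ℝ) := by nlinarith [(Nat.cast_nonneg k : (0:ℝ) ≤ (k:ℝ))]
  rw [dm_pow, nd, dm_fst, dm_snd]
  set E : ℕ → ℝ := fun t => (((t:ℝ)+1)*(n₂:ℝ))^(n₂) * q^(n₂) * r^t with hE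
  -- fst part
  have hfst : ‖(J^(k+1)) i j‖ ≤ E (k+1) := entry_pow_unif J r q hr hq hJtri hJdiag hoff (k+1) i j
  -- snd part
  have hsndterm : ∀ m ∈ Finset.range (k+1),
      ‖(J^m * H * J^(k-m)) i j‖ ≤ (n₂:ℝ)^2 * hB * E m * E (k-m) := by
    intro m hm
    rw [Matrix.mul_apply]
    refine le_trans (norm_sum_le _ _) ?_
    have hterm : ∀ a : Fin n₂, ‖(J^m * H) i a * (J^(k-m)) a j‖ ≤
        ((n₂:ℝ) * hB * E m) * E (k-m) := by
      intro a
      refine le_trans (norm_mul_le _ _) ?_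
      have h1 : ‖(J^m * H) i a‖ ≤ (n₂:ℝ) * hB * E m := by
        rw [Matrix.mul_apply]
        refine le_trans (norm_sum_le _ _) ?_
        have : ∀ b : Fin n₂, ‖(J^m) i b * H b a‖ ≤ E m * hB := by
          intro b
          refine le_trans (norm_mul_le _ _) ?_
          exact mul_le_mul (entry_pow_unif J r q hr hq hJtri hJdiag hoff m i b) (hH b a)
            (norm_nonneg _) (by rw [hE]; positivity)
        refine le_trans (Finset.sum_le_sum fun b _ => this b) ?_
        rw [Finset.sum_const, Finset.card_univ, Fintype.card_fin, nsmul_eq_mul]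
        apply le_of_eq; ring
      exact mul_le_mul h1 (entry_pow_unif J r q hr hq hJtri hJdiag hoff (k-m) a j)
        (norm_nonneg _) (by positivity)
    refine le_trans (Finset.sum_le_sum fun a _ => hterm a) ?_
    rw [Finset.sum_const, Finset.card_univ, Fintype.card_fin, nsmul_eq_mul]
    apply le_of_eq; ring
  have hsnd : ‖(∑ m ∈ Finset.range (k+1), J^m * H * J^(k+1-1-m)) i j‖ ≤
      ((k:ℝ)+1) * ((n₂:ℝ)^2 * hB * ((((k:ℝ)+2)*(n₂:ℝ))^(n₂) * q^(n₂))^2 * r^k) := by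
    rw [show k+1-1 = k from rfl]
    rw [Matrix.sum_apply]
    refine le_trans (norm_sum_le _ _) ?_
    have hub : ∀ m ∈ Finset.range (k+1), ‖(J^m * H * J^(k-m)) i j‖ ≤
        (n₂:ℝ)^2 * hB * ((((k:ℝ)+2)*(n₂:ℝ))^(n₂) * q^(n₂))^2 * r^k := by
      intro m hm
      rw [Finset.mem_range] at hm
      refine le_trans (hsndterm m (Finset.mem_range.mpr hm)) ?_
      have e1 : E m ≤ (((k:ℝ)+2)*(n₂:ℝ))^(n₂) * q^(n₂) * r^m := by
        rw [hE]
        have : (((m:ℝ)+1)*(n₂:ℝ))^(n₂) ≤ (((k:ℝ)+2)*(n₂:ℝ))^(n₂) := by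
          apply pow_le_pow_left₀ (by positivity)
          have : (m:ℝ) ≤ (k:ℝ) := by exact_mod_cast Nat.le_of_lt_succ hm
          nlinarith
        exact mul_le_mul_of_nonneg_right (mul_le_mul_of_nonneg_right this (by positivity))
          (by positivity)
      have e2 : E (k-m) ≤ (((k:ℝ)+2)*(n₂:ℝ))^(n₂) * q^(n₂) * r^(k-m) := by
        rw [hE]
        have : (((((k-m):ℕ)):ℝ)+1)*(n₂:ℝ) ≤ ((k:ℝ)+2)*(n₂:ℝ) := by
          have : ((k-m:ℕ):ℝ) ≤ (k:ℝ) := by exact_mod_cast Nat.sub_le k m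
          nlinarith
        exact mul_le_mul_of_nonneg_right (mul_le_mul_of_nonneg_right
          (pow_le_pow_left₀ (by positivity) this n₂) (by positivity)) (by positivity)
      have hrm : r^m * r^(k-m) = r^k := by
        rw [← pow_add]
        congr 1
        omega
      calc (n₂:ℝ)^2 * hB * E m * E (k-m)
          ≤ (n₂:ℝ)^2 * hB * ((((k:ℝ)+2)*(n₂:ℝ))^(n₂) * q^(n₂) * r^m)
            * ((((k:ℝ)+2)*(n₂:ℝ))^(n₂) * q^(n₂) * r^(k-m)) := by
            have hEm : (0:ℝ) ≤ E m := by rw [hE]; positivity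
            have hEkm : (0:ℝ) ≤ E (k-m) := by rw [hE]; positivity
            apply mul_le_mul _ e2 hEkm (by positivity)
            exact mul_le_mul_of_nonneg_left e1 (by positivity)
        _ = (n₂:ℝ)^2 * hB * ((((k:ℝ)+2)*(n₂:ℝ))^(n₂) * q^(n₂))^2 * (r^m * r^(k-m)) := by ring
        _ = _ := by rw [hrm]
    refine le_trans (Finset.sum_le_sum hub) ?_
    rw [Finset.sum_const, Finset.card_range, nsmul_eq_mul]
    push_cast
    apply le_of_eq; ring
  -- combine
  refine le_trans (add_le_add hfst hsnd) ?_
  have c1 : E (k+1) ≤ (((k:ℝ)+2)*(n₂:ℝ))^(2*n₂+1) * (q^(2*n₂) * 1) * r^(k+1) := by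
    rw [hE]
    push_cast
    have h1 : (((k:ℝ)+1+1)*(n₂:ℝ))^(n₂) ≤ (((k:ℝ)+2)*(n₂:ℝ))^(2*n₂+1) := by
      rw [show ((k:ℝ)+1+1) = ((k:ℝ)+2) by ring]
      exact pow_le_pow_right₀ hb1 (by omega)
    have h2 : q^(n₂) ≤ q^(2*n₂) := pow_le_pow_right₀ hq (by omega)
    rw [mul_one]
    exact mul_le_mul_of_nonneg_right (mul_le_mul h1 h2 (by positivity) (by positivity))
      (by positivity)
  have c2 : ((k:ℝ)+1) * ((n₂:ℝ)^2 * hB * ((((k:ℝ)+2)*(n₂:ℝ))^(n₂) * q^(n₂))^2 * r^k) ≤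
      (((k:ℝ)+2)*(n₂:ℝ))^(2*n₂+1) * (q^(2*n₂) * ((n₂:ℝ)^2 * hB / r)) * r^(k+1) := by
    have hkk : ((k:ℝ)+1) ≤ ((k:ℝ)+2)*(n₂:ℝ) := by nlinarith [(Nat.cast_nonneg k : (0:ℝ) ≤ (k:ℝ))]
    have expand : (((k:ℝ)+2)*(n₂:ℝ))^(2*n₂+1) * (q^(2*n₂) * ((n₂:ℝ)^2 * hB / r)) * r^(k+1)
        = (((k:ℝ)+2)*(n₂:ℝ)) * ((n₂:ℝ)^2 * hB * ((((k:ℝ)+2)*(n₂:ℝ))^(n₂) * q^(n₂))^2 * r^k) := by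
      rw [pow_succ r k]
      field_simp
      rw [show 2*n₂+1 = n₂ + n₂ + 1 by omega, pow_add, pow_add, show 2*n₂ = n₂ + n₂ by omega,
        pow_add]
      ring
    rw [expand]
    exact mul_le_mul_of_nonneg_right hkk (by positivity)
  calc E (k+1) + ((k:ℝ)+1) * ((n₂:ℝ)^2 * hB * ((((k:ℝ)+2)*(n₂:ℝ))^(n₂) * q^(n₂))^2 * r^k)
      ≤ (((k:ℝ)+2)*(n₂:ℝ))^(2*n₂+1) * (q^(2*n₂) * 1) * r^(k+1)
        + (((k:ℝ)+2)*(n₂:ℝ))^(2*n₂+1) * (q^(2*n₂) * ((n₂:ℝ)^2 * hB / r)) * r^(k+1) :=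
        add_le_add c1 c2
    _ = _ := by ring
end


lemma final_numeric (CP K Cη c₀ r labs Bk Nmu : ℝ) (n₂ k' : ℕ)
    (hCP0 : 0 ≤ CP) (hK0 : 0 < K) (hCη0 : 0 ≤ Cη) (hc₀0 : 0 ≤ c₀)
    (hr : 0 < r) (hlabs : 0 < labs)
    (hBk : Bk = (((k':ℝ)+2)*(n₂:ℝ))^(2*n₂+1) * K * r^(k'+1))
    (hNmu0 : 0 ≤ Nmu)
    (hNmu_le : Nmu ≤ (1 + c₀ * ((k':ℝ)+1)) * (labs⁻¹)^(k'+1)) :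
    CP * (Bk * Cη * Nmu) ≤
      (CP * ((2*(n₂:ℝ))^(2*n₂+1) * K * Cη * (1+c₀)) + 1) * (((k':ℝ)+1))^(2*n₂+2)
        * (r / labs)^(k'+1) := by
  have hn₂R : (0:ℝ) ≤ (n₂:ℝ) := Nat.cast_nonneg n₂
  have hk'0 : (0:ℝ) ≤ (k':ℝ) := Nat.cast_nonneg k'
  have hBk0 : 0 ≤ Bk := by rw [hBk]; positivity
  have hk2 : ((k':ℝ)+2) ≤ 2*((k':ℝ)+1) := by linarith
  have hkk' : ((k':ℝ)+2)*(n₂:ℝ) ≤ 2*(n₂:ℝ)*((k':ℝ)+1) := by nlinarith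
  have hBk_le : Bk ≤ (2*(n₂:ℝ))^(2*n₂+1) * ((k':ℝ)+1)^(2*n₂+1) * K * r^(k'+1) := by
    rw [hBk]
    have h1 : (((k':ℝ)+2)*(n₂:ℝ))^(2*n₂+1) ≤ (2*(n₂:ℝ)*((k':ℝ)+1))^(2*n₂+1) :=
      pow_le_pow_left₀ (by positivity) hkk' _
    have h2 : (2*(n₂:ℝ)*((k':ℝ)+1))^(2*n₂+1)
        = (2*(n₂:ℝ))^(2*n₂+1) * ((k':ℝ)+1)^(2*n₂+1) := mul_pow _ _ _
    rw [← h2]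
    exact mul_le_mul_of_nonneg_right (mul_le_mul_of_nonneg_right h1 hK0.le) (by positivity)
  have hc₀k : 1 + c₀ * ((k':ℝ)+1) ≤ (1+c₀) * ((k':ℝ)+1) := by nlinarith
  have hpownn : (0:ℝ) ≤ (labs⁻¹)^(k'+1) := by positivity
  calc CP * (Bk * Cη * Nmu)
      ≤ CP * ((2*(n₂:ℝ))^(2*n₂+1) * ((k':ℝ)+1)^(2*n₂+1) * K * r^(k'+1) * Cη
          * ((1+c₀) * ((k':ℝ)+1) * (labs⁻¹)^(k'+1))) := by
        apply mul_le_mul_of_nonneg_left _ hCP0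
        have hs1 : Bk * Cη * Nmu ≤ Bk * Cη * ((1 + c₀*((k':ℝ)+1)) * (labs⁻¹)^(k'+1)) :=
          mul_le_mul_of_nonneg_left hNmu_le (mul_nonneg hBk0 hCη0)
        refine le_trans hs1 ?_
        have hs2 : Bk * Cη ≤ (2*(n₂:ℝ))^(2*n₂+1) * ((k':ℝ)+1)^(2*n₂+1) * K * r^(k'+1) * Cη :=
          mul_le_mul_of_nonneg_right hBk_le hCη0
        have hs3 : (1 + c₀*((k':ℝ)+1)) * (labs⁻¹)^(k'+1)
            ≤ (1+c₀) * ((k':ℝ)+1) * (labs⁻¹)^(k'+1) :=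
          mul_le_mul_of_nonneg_right hc₀k hpownn
        have hA0 : (0:ℝ) ≤ (1 + c₀*((k':ℝ)+1)) * (labs⁻¹)^(k'+1) := by
          apply mul_nonneg _ hpownn
          nlinarith
        have hB0' : (0:ℝ) ≤ (2*(n₂:ℝ))^(2*n₂+1) * ((k':ℝ)+1)^(2*n₂+1) * K * r^(k'+1) * Cη := by
          apply mul_nonneg _ hCη0
          positivity
        exact mul_le_mul hs2 hs3 hA0 hB0'
    _ = (CP * ((2*(n₂:ℝ))^(2*n₂+1) * K * Cη * (1+c₀))) * ((k':ℝ)+1)^(2*n₂+2)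
        * (r^(k'+1) * (labs⁻¹)^(k'+1)) := by ring
    _ ≤ (CP * ((2*(n₂:ℝ))^(2*n₂+1) * K * Cη * (1+c₀)) + 1) * ((k':ℝ)+1)^(2*n₂+2)
        * (r / labs)^(k'+1) := by
        rw [div_pow, div_eq_mul_inv, ← inv_pow]
        apply mul_le_mul_of_nonneg_right _ (by positivity)
        apply mul_le_mul_of_nonneg_right _ (by positivity)
        linarith

lemma smul_one_mulVec {m : ℕ} (c : DualNumber ℍ) (x : Fin m → DualNumber ℍ) :
    (c • (1 : Matrix (Fin m) (Fin m) (DualNumber ℍ))).mulVec x = fun i => c * x i := by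
  funext i
  simp only [Matrix.mulVec, dotProduct, Matrix.smul_apply, Matrix.one_apply,
    smul_eq_mul, mul_ite, mul_one, mul_zero, ite_mul, zero_mul]
  rw [Finset.sum_ite_eq Finset.univ i (fun j => c * x j)]
  simp

set_option maxHeartbeats 1000000 in
set_option synthInstance.maxHeartbeats 400000 in
theorem stmt12 {n₁ n₂ : ℕ} (lams lamd r : ℝ) (hr : 0 < r) (hrs : r < |lams|)
    (J H : Matrix (Fin n₂) (Fin n₂) ℍ)
    (hJtri : ∀ i j : Fin n₂, (j : ℕ) < (i : ℕ) → J i j = 0)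
    (hJdiag : ∀ i, ‖J i i‖ ≤ r)
    (P Pinv : Matrix (Fin n₁ ⊕ Fin n₂) (Fin n₁ ⊕ Fin n₂) (DualNumber ℍ))
    (hP1 : P * Pinv = 1) (hP2 : Pinv * P = 1)
    (η : Fin n₁ ⊕ Fin n₂ → DualNumber ℍ) :
    ∃ C > (0 : ℝ), ∃ d : ℕ, ∀ k : ℕ, 1 ≤ k →
      norm2R
        ((fun i =>
            (((P * Matrix.fromBlocks
                  ((TrivSqZeroExt.inl (rq lams) + TrivSqZeroExt.inr (rq lamd) : DualNumber ℍ) •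
                    (1 : Matrix (Fin n₁) (Fin n₁) (DualNumber ℍ)))
                  0 0 (dm J H) * Pinv) ^ k).mulVec (P.mulVec η)) i *
              (TrivSqZeroExt.inl (rq lams⁻¹) +
                TrivSqZeroExt.inr (-rq (lams⁻¹ * lamd * lams⁻¹)) : DualNumber ℍ) ^ k) -
          P.mulVec (Sum.elim (fun i => η (Sum.inl i)) fun _ => 0)) ≤
        C * (k : ℝ) ^ d * (r / |lams|) ^ k := by
  classical
  have halam : (0:ℝ) < |lams| := lt_trans hr hrs
  have hlamne : lams ≠ 0 := fun h => by rw [h, abs_zero] at halam; exact lt_irrefl _ halam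
  set lam : DualNumber ℍ := TrivSqZeroExt.inl (rq lams) + TrivSqZeroExt.inr (rq lamd) with hlam
  set mu : DualNumber ℍ := TrivSqZeroExt.inl (rq lams⁻¹) +
    TrivSqZeroExt.inr (-rq (lams⁻¹ * lamd * lams⁻¹)) with hmu
  have hmu2 : mu = TrivSqZeroExt.inl (rq lams⁻¹) +
      TrivSqZeroExt.inr (rq (-(lams⁻¹ * lamd * lams⁻¹))) := by
    rw [hmu, show rq (-(lams⁻¹ * lamd * lams⁻¹)) = -rq (lams⁻¹ * lamd * lams⁻¹) by
      rw [rq, rq, map_neg]]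
  have hmucomm : ∀ z : DualNumber ℍ, Commute mu z := by
    intro z
    show mu * z = z * mu
    rw [hmu2]
    exact dual_commute _ _ z
  have hlamcomm : ∀ z : DualNumber ℍ, Commute lam z := by
    intro z
    show lam * z = z * lam
    rw [hlam]
    exact dual_commute _ _ z
  have hlmu : lam * mu = 1 := by
    rw [hlam, hmu2]
    refine TrivSqZeroExt.ext ?_ ?_
    · rw [TrivSqZeroExt.fst_mul]
      simp only [TrivSqZeroExt.fst_add, TrivSqZeroExt.fst_inl,
        TrivSqZeroExt.fst_inr, add_zero, TrivSqZeroExt.fst_one]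
      rw [rq_mul, mul_inv_cancel₀ hlamne, rq, _root_.map_one]
    · rw [TrivSqZeroExt.snd_mul]
      simp only [TrivSqZeroExt.fst_add, TrivSqZeroExt.snd_add,
        TrivSqZeroExt.fst_inl, TrivSqZeroExt.fst_inr, TrivSqZeroExt.snd_inl,
        TrivSqZeroExt.snd_inr, add_zero, zero_add, smul_eq_mul,
        MulOpposite.smul_eq_mul_unop, MulOpposite.unop_op, TrivSqZeroExt.snd_one]
      rw [rq_mul, rq_mul, show rq (lams * -(lams⁻¹ * lamd * lams⁻¹)) + rq (lamd * lams⁻¹)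
          = rq (lams * -(lams⁻¹ * lamd * lams⁻¹) + lamd * lams⁻¹) by rw [rq, rq, rq, ← map_add]]
      rw [rq]
      convert map_zero (algebraMap ℝ ℍ) using 2
      field_simp
      ring
  -- block matrix powers
  set Jh : Matrix (Fin n₂) (Fin n₂) (DualNumber ℍ) := dm J H with hJh
  set D : Matrix (Fin n₁ ⊕ Fin n₂) (Fin n₁ ⊕ Fin n₂) (DualNumber ℍ) :=
    Matrix.fromBlocks (lam • 1) 0 0 Jh with hD
  have hDpow : ∀ k : ℕ, D^k = Matrix.fromBlocks (lam^k • 1) 0 0 (Jh^k) := by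
    intro k
    induction k with
    | zero => simp [Matrix.fromBlocks_one]
    | succ k ih =>
        rw [pow_succ, ih, hD, Matrix.fromBlocks_multiply]
        simp only [Matrix.mul_zero, Matrix.zero_mul, add_zero, zero_add, smul_mul_assoc,
          Matrix.one_mul, smul_smul, ← pow_succ]
  
  have hconj : ∀ k : ℕ, (P * D * Pinv)^k = P * D^k * Pinv := by
    intro k
    induction k with
    | zero => rw [pow_zero, pow_zero, Matrix.mul_one, hP1]
    | succ k ih =>
        rw [pow_succ, ih, pow_succ]
        calc P * D^k * Pinv * (P * D * Pinv)
            = P * D^k * ((Pinv * P) * (D * Pinv)) := by simp only [Matrix.mul_assoc]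
          _ = P * (D^k * D) * Pinv := by
              rw [hP2, Matrix.one_mul]
              simp only [Matrix.mul_assoc]
  -- constants
  have hq0 : (0:ℝ) ≤ ∑ i, ∑ j, ‖J i j‖ :=
    Finset.sum_nonneg fun i _ => Finset.sum_nonneg fun j _ => norm_nonneg _
  set q : ℝ := (r + ∑ i, ∑ j, ‖J i j‖) / r with hqdef
  have hq : 1 ≤ q := by rw [hqdef, le_div_iff₀ hr]; linarith
  have hqpos : 0 < q := lt_of_lt_of_le zero_lt_one hq
  have hoff : ∀ i j, ‖J i j‖ ≤ q * r := by
    intro i j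
    rw [hqdef, div_mul_cancel₀ _ (ne_of_gt hr)]
    have h1 : ‖J i j‖ ≤ ∑ j', ‖J i j'‖ :=
      Finset.single_le_sum (fun _ _ => norm_nonneg _) (Finset.mem_univ j)
    have h2 : (∑ j', ‖J i j'‖) ≤ ∑ i', ∑ j', ‖J i' j'‖ :=
      Finset.single_le_sum (fun i' _ => Finset.sum_nonneg fun _ _ => norm_nonneg _)
        (Finset.mem_univ i)
    linarith
  set hBc : ℝ := 1 + ∑ i, ∑ j, ‖H i j‖ with hBcdef
  have hBsum : (0:ℝ) ≤ ∑ i, ∑ j, ‖H i j‖ :=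
    Finset.sum_nonneg fun i _ => Finset.sum_nonneg fun j _ => norm_nonneg _
  have hB0 : 0 ≤ hBc := by rw [hBcdef]; linarith
  have hHb : ∀ i j, ‖H i j‖ ≤ hBc := by
    intro i j
    rw [hBcdef]
    have h1 : ‖H i j‖ ≤ ∑ j', ‖H i j'‖ :=
      Finset.single_le_sum (fun _ _ => norm_nonneg _) (Finset.mem_univ j)
    have h2 : (∑ j', ‖H i j'‖) ≤ ∑ i', ∑ j', ‖H i' j'‖ :=
      Finset.single_le_sum (fun i' _ => Finset.sum_nonneg fun _ _ => norm_nonneg _)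
        (Finset.mem_univ i)
    linarith
  set K : ℝ := q^(2*n₂) * (1 + (n₂:ℝ)^2 * hBc / r) with hKdef
  have hK0 : 0 < K := by
    rw [hKdef]
    have : (0:ℝ) ≤ (n₂:ℝ)^2 * hBc / r := by positivity
    have hq2 : (0:ℝ) < q^(2*n₂) := by positivity
    nlinarith
  set c₀ : ℝ := |(-(lams⁻¹ * lamd * lams⁻¹))| * |lams| with hc₀def
  have hc₀0 : 0 ≤ c₀ := by rw [hc₀def]; positivity
  set CP : ℝ := ∑ i, ∑ j, nd (P i j) with hCPdef
  have hCP0 : 0 ≤ CP := Finset.sum_nonneg fun i _ => Finset.sum_nonneg fun j _ => nd_nonneg _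
  set Cη : ℝ := ∑ j : Fin n₂, nd (η (Sum.inr j)) with hCηdef
  have hCη0 : 0 ≤ Cη := Finset.sum_nonneg fun j _ => nd_nonneg _
  refine ⟨CP * ((2*(n₂:ℝ))^(2*n₂+1) * K * Cη * (1+c₀)) + 1, ?_, 2*n₂+2, ?_⟩
  · have h1 : (0:ℝ) ≤ CP * ((2*(n₂:ℝ))^(2*n₂+1) * K * Cη * (1+c₀)) := by
      apply mul_nonneg hCP0
      apply mul_nonneg (mul_nonneg (mul_nonneg (by positivity) hK0.le) hCη0)
      linarith
    linarith
  intro k hk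
  obtain ⟨k', rfl⟩ : ∃ k', k = k'+1 := ⟨k-1, by omega⟩
  -- the vector equals P.mulVec w
  set w : (Fin n₁ ⊕ Fin n₂) → DualNumber ℍ := fun j =>
    ((D^(k'+1)).mulVec η) j * mu^(k'+1) - Sum.elim (fun i => η (Sum.inl i)) (fun _ => 0) j
    with hwdef
  have hveq : ((fun i => (((P * D * Pinv)^(k'+1)).mulVec (P.mulVec η)) i * mu^(k'+1)) -
      P.mulVec (Sum.elim (fun i => η (Sum.inl i)) fun _ => 0)) = P.mulVec w := by
    funext i0
    rw [Pi.sub_apply, hconj (k'+1), Matrix.mulVec_mulVec,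
      show P * D^(k'+1) * Pinv * P = P * D^(k'+1) by rw [Matrix.mul_assoc, hP2, Matrix.mul_one],
      ← Matrix.mulVec_mulVec]
    simp only [Matrix.mulVec, dotProduct, hwdef]
    rw [Finset.sum_mul, ← Finset.sum_sub_distrib]
    exact Finset.sum_congr rfl fun j _ => by rw [mul_sub, mul_assoc]
  rw [hveq]
  -- compute (D^(k'+1)).mulVec η
  have hDkv : (D^(k'+1)).mulVec η = Sum.elim (fun i => lam^(k'+1) * η (Sum.inl i))
      ((Jh^(k'+1)).mulVec (fun j => η (Sum.inr j))) := by
    rw [hDpow (k'+1), Matrix.fromBlocks_mulVec, Matrix.zero_mulVec, Matrix.zero_mulVec,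
      add_zero, zero_add, smul_one_mulVec]
    rfl
  set X : Fin n₂ → DualNumber ℍ := (Jh^(k'+1)).mulVec (fun j => η (Sum.inr j)) with hXdef
  have hwinl : ∀ i : Fin n₁, w (Sum.inl i) = 0 := by
    intro i
    rw [hwdef]
    simp only [hDkv, Sum.elim_inl]
    have hc := ((hmucomm (η (Sum.inl i))).pow_left (k'+1)).eq
    rw [mul_assoc, ← hc, ← mul_assoc, ← ((hmucomm lam).symm.mul_pow (k'+1)), hlmu, one_pow,
      one_mul, sub_self]
  have hwinr : ∀ i : Fin n₂, w (Sum.inr i) = X i * mu^(k'+1) := by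
    intro i
    rw [hwdef]
    simp only [hDkv, Sum.elim_inr, sub_zero, hXdef]
  -- norm bounds
  set Nmu : ℝ := nd (mu^(k'+1)) with hNmudef
  have hNmu0 : 0 ≤ Nmu := nd_nonneg _
  set Bk : ℝ := (((k':ℝ)+2)*(n₂:ℝ))^(2*n₂+1) * K * r^(k'+1) with hBkdef
  have hBk0 : 0 ≤ Bk := by
    rw [hBkdef]
    apply mul_nonneg (mul_nonneg (by positivity) hK0.le) (by positivity)
  have hentry : ∀ i j : Fin n₂, nd ((Jh^(k'+1)) i j) ≤ Bk :=
    fun i j => dm_entry_bound J H r q hBc hr hq hJtri hJdiag hoff hHb hB0 k' i j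
  have hX : ∀ i : Fin n₂, nd (X i) ≤ Bk * Cη := by
    intro i
    rw [hXdef]
    show nd (∑ j, (Jh^(k'+1)) i j * η (Sum.inr j)) ≤ Bk * Cη
    refine le_trans (nd_sum_le _ _) ?_
    refine le_trans (Finset.sum_le_sum fun j _ => nd_mul_le _ _) ?_
    rw [hCηdef, Finset.mul_sum]
    exact Finset.sum_le_sum fun j _ =>
      mul_le_mul_of_nonneg_right (hentry i j) (nd_nonneg _)
  have hw : ∀ j, nd (w j) ≤ Bk * Cη * Nmu := by
    intro j
    rcases j with i | i
    · rw [hwinl i]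
      simp only [nd, TrivSqZeroExt.fst_zero, TrivSqZeroExt.snd_zero, norm_zero, add_zero]
      exact mul_nonneg (mul_nonneg hBk0 hCη0) hNmu0
    · rw [hwinr i]
      refine le_trans (nd_mul_le _ _) ?_
      exact mul_le_mul_of_nonneg_right (hX i) hNmu0
  have hchain : norm2R (P.mulVec w) ≤ CP * (Bk * Cη * Nmu) := by
    refine le_trans (norm2R_le_sum_nd _) ?_
    have h1 : ∀ i0, nd ((P.mulVec w) i0) ≤ ∑ j, nd (P i0 j) * (Bk * Cη * Nmu) := by
      intro i0
      show nd (∑ j, P i0 j * w j) ≤ _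
      refine le_trans (nd_sum_le _ _) ?_
      refine Finset.sum_le_sum fun j _ => le_trans (nd_mul_le _ _) ?_
      exact mul_le_mul_of_nonneg_left (hw j) (nd_nonneg _)
    refine le_trans (Finset.sum_le_sum fun i0 _ => h1 i0) ?_
    rw [hCPdef, Finset.sum_mul]
    apply le_of_eq
    exact Finset.sum_congr rfl fun i0 _ => (Finset.sum_mul _ _ _).symm
  refine le_trans hchain ?_
  -- compute Nmu
  have hmupow : mu^(k'+1) = TrivSqZeroExt.inl (rq ((lams⁻¹)^(k'+1))) +
      TrivSqZeroExt.inr (rq (((k'+1:ℕ):ℝ) * (lams⁻¹)^(k'+1-1) * (-(lams⁻¹ * lamd * lams⁻¹)))) := by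
    rw [hmu2]
    exact dual_pow _ _ (k'+1)
  have habs : |lams⁻¹| = |lams|⁻¹ := abs_inv lams
  have hNmuval : Nmu = (|lams|⁻¹)^(k'+1)
      + ((k'+1:ℕ):ℝ) * (|lams|⁻¹)^(k') * |(-(lams⁻¹ * lamd * lams⁻¹))| := by
    rw [hNmudef, hmupow, nd]
    simp only [TrivSqZeroExt.fst_add, TrivSqZeroExt.snd_add, TrivSqZeroExt.fst_inl,
      TrivSqZeroExt.fst_inr, TrivSqZeroExt.snd_inl, TrivSqZeroExt.snd_inr, add_zero, zero_add]
    rw [norm_rq, norm_rq, abs_pow, habs, abs_mul, abs_mul, abs_pow, habs, Nat.abs_cast,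
      show k'+1-1 = k' from rfl]
  have hpowm1 : (|lams|⁻¹)^(k') = (|lams|⁻¹)^(k'+1) * |lams| := by
    rw [pow_succ]
    field_simp
  have hNmu_le : Nmu ≤ (1 + c₀ * ((k':ℝ)+1)) * (|lams|⁻¹)^(k'+1) := by
    rw [hNmuval, hpowm1, hc₀def]
    apply le_of_eq
    push_cast
    ring
  have hfin := final_numeric CP K Cη c₀ r |lams| Bk Nmu n₂ k' hCP0 hK0 hCη0 hc₀0 hr halam
    hBkdef hNmu0 hNmu_le
  refine le_trans hfin (le_of_eq ?_)
  push_cast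
  ring
end
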